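/- For every x ∈ {1,…,m} and every n ≥ 0, dim_ℂ Ĉ^n_x = (r+s−1)^n. -/

import Mathlib

open Finsupp Submodule LinearMap

set_option maxSynthPendingDepth 2

namespace NilpotentCohomology

/-- The big space of cochains of all degrees: formal ℂ-linear combinations of
basis symbols `φ^I_x` indexed by a multi-index `I : List (Fin m)` and an output
index `x : Fin m`. -/
abbrev Cochain (m : ℕ) : Type := (List (Fin m) × Fin m) →₀ ℂ

/-- Parity of an index: `0` if the index is among the first `r` (even) ones, `1` otherwise. -/
def par (r : ℕ) {m : ℕ} (i : Fin m) : ℕ := if (i : ℕ) < r then 0 else 1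

/-- Parity of a multi-index: the sum of the parities of its entries. -/
def lpar (r : ℕ) {m : ℕ} (I : List (Fin m)) : ℕ := (I.map (par r)).sum

/-- Parity of a basis cochain `φ^I_x`: `|I| + |x|`. -/
def ppar (r : ℕ) {m : ℕ} (p : List (Fin m) × Fin m) : ℕ := lpar r p.1 + par r p.2

/-- `(I, J, k)`: the multi-index `I` with its `k`-th entry (0-indexed) replaced by the string `J`. -/
def insertAt {m : ℕ} (I J : List (Fin m)) (k : ℕ) : List (Fin m) :=
  I.take k ++ J ++ I.drop (k + 1)

/-- The insertion product of two basis cochains `φ^I_x ∘ φ^J_y`. -/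
noncomputable def basisComp (r : ℕ) {m : ℕ} (p q : List (Fin m) × Fin m) : Cochain m :=
  ∑ k : Fin p.1.length,
    if p.1.get k = q.2 then
      ((-1 : ℂ) ^ (lpar r (p.1.take ((k : ℕ) + 1)) * ppar r q)) •
        Finsupp.single (insertAt p.1 q.1 (k : ℕ), p.2) (1 : ℂ)
    else 0

/-- The insertion product, extended bilinearly. -/
noncomputable def comp (r : ℕ) {m : ℕ} :
    Cochain m →ₗ[ℂ] Cochain m →ₗ[ℂ] Cochain m :=
  Finsupp.lsum ℂ fun p => LinearMap.toSpanSingleton ℂ _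
    (Finsupp.lsum ℂ fun q => LinearMap.toSpanSingleton ℂ (Cochain m) (basisComp r p q))

/-- The bracket `[φ, ψ] = φ∘ψ − (−1)^{|φ||ψ|} ψ∘φ` of two parity-homogeneous cochains
of parities `pf` and `pg`. -/
noncomputable def bracket (r : ℕ) {m : ℕ} (pf pg : ℕ) (f g : Cochain m) : Cochain m :=
  comp r f g - ((-1 : ℂ) ^ (pf * pg)) • comp r g f

/-- The quadratic cochain `φ^{(a,a)}_b`. -/
noncomputable def dd {m : ℕ} (a b : Fin m) : Cochain m :=
  Finsupp.single ([a, a], b) (1 : ℂ)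

/-- The linear map multiplying each basis cochain by `(−1)^{its parity}`. -/
noncomputable def twist (r : ℕ) {m : ℕ} : Cochain m →ₗ[ℂ] Cochain m :=
  Finsupp.lsum ℂ fun p => LinearMap.toSpanSingleton ℂ (Cochain m)
    (((-1 : ℂ) ^ (ppar r p)) • Finsupp.single p (1 : ℂ))

/-- The coboundary operator `D(φ) = [d, φ] = d∘φ − (−1)^{|d||φ|} φ∘d` for the odd
codifferential `d = φ^{(a,a)}_b`, extended linearly from parity-homogeneous `φ`. -/
noncomputable def Dop (r : ℕ) {m : ℕ} (a b : Fin m) : Cochain m →ₗ[ℂ] Cochain m :=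
  comp r (dd a b) - ((comp r).flip (dd a b)) ∘ₗ twist r

/-- `C^n`: the span of the basis cochains `φ^I_x` with `I` of length `n`. -/
noncomputable def Cn (m n : ℕ) : Submodule ℂ (Cochain m) :=
  Submodule.span ℂ
    {f | ∃ I : List (Fin m), I.length = n ∧ ∃ x : Fin m, f = Finsupp.single (I, x) 1}

/-- `C^n_x`: the span of the basis cochains `φ^I_x` with `I` of length `n` and output `x`. -/
noncomputable def Cnx (m : ℕ) (n : ℕ) (x : Fin m) : Submodule ℂ (Cochain m) :=
  Submodule.span ℂ
    {f | ∃ I : List (Fin m), I.length = n ∧ f = Finsupp.single (I, x) 1}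

/-- The projection onto the cochains with output index `x`. -/
noncomputable def projOut {m : ℕ} (x : Fin m) : Cochain m →ₗ[ℂ] Cochain m :=
  Finsupp.lsum ℂ fun p => LinearMap.toSpanSingleton ℂ (Cochain m)
    (if p.2 = x then Finsupp.single p (1 : ℂ) else 0)

/-- `λ^J (φ^I_x) = φ^{JI}_x`, extended linearly. -/
noncomputable def lam {m : ℕ} (J : List (Fin m)) : Cochain m →ₗ[ℂ] Cochain m :=
  Finsupp.lsum ℂ fun p => LinearMap.toSpanSingleton ℂ (Cochain m)
    (Finsupp.single (J ++ p.1, p.2) (1 : ℂ))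

/-- `ρ^J (φ^I_x) = (−1)^{|I||J|} φ^{IJ}_x`, extended linearly. -/
noncomputable def rho (r : ℕ) {m : ℕ} (J : List (Fin m)) : Cochain m →ₗ[ℂ] Cochain m :=
  Finsupp.lsum ℂ fun p => LinearMap.toSpanSingleton ℂ (Cochain m)
    (((-1 : ℂ) ^ (lpar r p.1 * lpar r J)) • Finsupp.single (p.1 ++ J, p.2) (1 : ℂ))

/-- `θ = λ^{(a,b)} − λ^{(b,a)}`. -/
noncomputable def theta {m : ℕ} (a b : Fin m) : Cochain m →ₗ[ℂ] Cochain m :=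
  lam [a, b] - lam [b, a]

/-- `τ`: swaps the outputs `a` and `b` of basis cochains (identity on other outputs). -/
noncomputable def tau {m : ℕ} (a b : Fin m) : Cochain m →ₗ[ℂ] Cochain m :=
  Finsupp.lsum ℂ fun p => LinearMap.toSpanSingleton ℂ (Cochain m)
    (Finsupp.single (p.1, if p.2 = a then b else if p.2 = b then a else p.2) (1 : ℂ))

/-! ### Full cohomology -/

/-- Cocycles of degree `n` of the full complex. -/
noncomputable def Zfull (r : ℕ) {m : ℕ} (a b : Fin m) (n : ℕ) : Submodule ℂ (Cochain m) :=
  Cn m n ⊓ LinearMap.ker (Dop r a b)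

/-- Coboundaries of degree `n` of the full complex (`C^{-1} = 0`). -/
noncomputable def Bfull (r : ℕ) {m : ℕ} (a b : Fin m) : ℕ → Submodule ℂ (Cochain m)
  | 0 => ⊥
  | n + 1 => Submodule.map (Dop r a b) (Cn m n)

/-- The full cohomology `H^n = Z^n / B^n`. -/
noncomputable abbrev Hfull (r : ℕ) {m : ℕ} (a b : Fin m) (n : ℕ) : Type :=
  Zfull r a b n ⧸ (Bfull r a b n).comap (Zfull r a b n).subtype

/-! ### The restricted complexes -/

/-- The restricted differential `D_x`: the `e₁`-output component of `D` when `x = a`,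
and `D` itself (which preserves output `x`) otherwise. -/
noncomputable def Dx (r : ℕ) {m : ℕ} (a b x : Fin m) : Cochain m →ₗ[ℂ] Cochain m :=
  if x = a then projOut a ∘ₗ Dop r a b else Dop r a b

/-- Cocycles of the restricted complex `(C^•_x, D_x)`. -/
noncomputable def Zx (r : ℕ) {m : ℕ} (a b x : Fin m) (n : ℕ) : Submodule ℂ (Cochain m) :=
  Cnx m n x ⊓ LinearMap.ker (Dx r a b x)

/-- Coboundaries of the restricted complex `(C^•_x, D_x)` (`C^{-1}_x = 0`). -/
noncomputable def Bx (r : ℕ) {m : ℕ} (a b x : Fin m) : ℕ → Submodule ℂ (Cochain m)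
  | 0 => ⊥
  | n + 1 => Submodule.map (Dx r a b x) (Cnx m n x)

/-- Cohomology `H^n_x` of the restricted complex `(C^•_x, D_x)`. -/
noncomputable abbrev Hx (r : ℕ) {m : ℕ} (a b x : Fin m) (n : ℕ) : Type :=
  Zx r a b x n ⧸ (Bx r a b x n).comap (Zx r a b x n).subtype

/-! ### The subcomplex `C^•_a ⊕ C^•_b` and the `b`-output complex -/

/-- `C^n_a ⊕ C^n_b` (internal direct sum). -/
noncomputable def Cpair (m : ℕ) (a b : Fin m) (n : ℕ) : Submodule ℂ (Cochain m) :=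
  Cnx m n a ⊔ Cnx m n b

noncomputable def Zpair (r : ℕ) {m : ℕ} (a b : Fin m) (n : ℕ) : Submodule ℂ (Cochain m) :=
  Cpair m a b n ⊓ LinearMap.ker (Dop r a b)

noncomputable def Bpair (r : ℕ) {m : ℕ} (a b : Fin m) : ℕ → Submodule ℂ (Cochain m)
  | 0 => ⊥
  | n + 1 => Submodule.map (Dop r a b) (Cpair m a b n)

/-- `H^n`: the cohomology of the subcomplex `(C^•_a ⊕ C^•_b, D)`. -/
noncomputable abbrev Hpair (r : ℕ) {m : ℕ} (a b : Fin m) (n : ℕ) : Type :=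
  Zpair r a b n ⧸ (Bpair r a b n).comap (Zpair r a b n).subtype

/-- Cocycles of `(C^•_b, D_b)`, where `D_b` is the restriction of `D`. -/
noncomputable def Zm (r : ℕ) {m : ℕ} (a b : Fin m) (n : ℕ) : Submodule ℂ (Cochain m) :=
  Cnx m n b ⊓ LinearMap.ker (Dop r a b)

noncomputable def Bm (r : ℕ) {m : ℕ} (a b : Fin m) : ℕ → Submodule ℂ (Cochain m)
  | 0 => ⊥
  | n + 1 => Submodule.map (Dop r a b) (Cnx m n b)

/-- `H^n_b`: the cohomology of `(C^•_b, D_b)`. -/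
noncomputable abbrev Hm (r : ℕ) {m : ℕ} (a b : Fin m) (n : ℕ) : Type :=
  Zm r a b n ⧸ (Bm r a b n).comap (Zm r a b n).subtype

lemma Zm_le_Zpair (r : ℕ) {m : ℕ} (a b : Fin m) (n : ℕ) :
    Zm r a b n ≤ Zpair r a b n :=
  inf_le_inf le_sup_right le_rfl

lemma Bm_le_Bpair (r : ℕ) {m : ℕ} (a b : Fin m) : ∀ n : ℕ, Bm r a b n ≤ Bpair r a b n
  | 0 => bot_le
  | _ + 1 => Submodule.map_mono le_sup_right

/-- The natural map `H^n_b → H^n` induced by the inclusion of cocycles. -/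
noncomputable def iotaHm (r : ℕ) {m : ℕ} (a b : Fin m) (n : ℕ) :
    Hm r a b n →ₗ[ℂ] Hpair r a b n :=
  Submodule.mapQ _ _ (Submodule.inclusion (Zm_le_Zpair r a b n))
    (fun z hz => Bm_le_Bpair r a b n hz)

/-- `Ĥ^n_f`: the image of `H^n_b` in `H^n`. -/
noncomputable def Hfhat (r : ℕ) {m : ℕ} (a b : Fin m) (n : ℕ) : Submodule ℂ (Hpair r a b n) :=
  LinearMap.range (iotaHm r a b n)

/-- `Ĥ^n_e = H^n / Ĥ^n_f`. -/
noncomputable abbrev Hehat (r : ℕ) {m : ℕ} (a b : Fin m) (n : ℕ) : Type :=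
  Hpair r a b n ⧸ Hfhat r a b n

/-! ### The spaces `Ĉ^n_x` of nontrivial cocycles -/

/-- The recursively defined subspaces `Ĉ^n_x` of nontrivial cocycles. -/
noncomputable def Chat (r : ℕ) {m : ℕ} (a b x : Fin m) : ℕ → Submodule ℂ (Cochain m)
  | 0 => Submodule.span ℂ {Finsupp.single (([] : List (Fin m)), x) 1}
  | 1 => Submodule.span ℂ
      ({Finsupp.single ([a], x) 1} ∪
        ⋃ c ∈ {c : Fin m | c ≠ a ∧ c ≠ b}, lam [c] '' (Chat r a b x 0 : Set (Cochain m)))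
  | n + 2 => Submodule.span ℂ
      ((⋃ c ∈ {c : Fin m | c ≠ a ∧ c ≠ b},
          lam [c] '' (Chat r a b x (n + 1) : Set (Cochain m))) ∪
        (theta a b '' (Chat r a b x n : Set (Cochain m))) ∪
        ⋃ c ∈ {c : Fin m | c ≠ a ∧ c ≠ b},
          (lam [a] + rho r [a]) '' (lam [c] '' (Chat r a b x n : Set (Cochain m))))


/-! ### Auxiliary development for `Chat_dim` -/

section ChatDimAux

section Ops
variable {m : ℕ}

lemma lam_eq_lmapDomain (J : List (Fin m)) :
    (lam J : Cochain m →ₗ[ℂ] Cochain m)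
      = Finsupp.lmapDomain ℂ ℂ (fun p => (J ++ p.1, p.2)) := by
  apply Finsupp.lhom_ext
  intro p c
  simp [lam, Finsupp.lsum_single, LinearMap.toSpanSingleton_apply, Finsupp.lmapDomain_apply,
    Finsupp.mapDomain_single, Finsupp.smul_single, smul_eq_mul, mul_one]

lemma lam_inj (J : List (Fin m)) :
    Function.Injective (fun p : List (Fin m) × Fin m => (J ++ p.1, p.2)) := by
  rintro ⟨I, y⟩ ⟨I', y'⟩ h
  simp only [Prod.mk.injEq] at h
  exact Prod.ext (List.append_cancel_left h.1) h.2

lemma lam_apply (J I : List (Fin m)) (y : Fin m) (φ : Cochain m) :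
    lam J φ (J ++ I, y) = φ (I, y) := by
  rw [lam_eq_lmapDomain]
  exact Finsupp.mapDomain_apply (lam_inj J) φ (I, y)

lemma lam_ne {J K : List (Fin m)} {y : Fin m} {φ : Cochain m}
    (h : lam J φ (K, y) ≠ 0) :
    ∃ I, K = J ++ I ∧ lam J φ (K, y) = φ (I, y) := by
  by_cases h' : ∃ I, K = J ++ I
  · obtain ⟨I, rfl⟩ := h'
    exact ⟨I, rfl, lam_apply J I y φ⟩
  · exfalso; apply h
    rw [lam_eq_lmapDomain]
    apply Finsupp.mapDomain_notin_range
    rintro ⟨⟨I, z⟩, hz⟩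
    simp only [Prod.mk.injEq] at hz
    exact h' ⟨I, hz.1.symm⟩

lemma lam_single (J : List (Fin m)) (p : List (Fin m) × Fin m) (c : ℂ) :
    lam J (Finsupp.single p c) = Finsupp.single (J ++ p.1, p.2) c := by
  rw [lam_eq_lmapDomain]
  simp [Finsupp.lmapDomain_apply, Finsupp.mapDomain_single]

variable {r : ℕ} {a : Fin m} (hpar : par r a = 0)
include hpar

lemma rho_eq_lmapDomain :
    (rho r [a] : Cochain m →ₗ[ℂ] Cochain m)
      = Finsupp.lmapDomain ℂ ℂ (fun p => (p.1 ++ [a], p.2)) := by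
  apply Finsupp.lhom_ext
  intro p c
  simp [rho, Finsupp.lsum_single, LinearMap.toSpanSingleton_apply, Finsupp.lmapDomain_apply,
    Finsupp.mapDomain_single, Finsupp.smul_single, smul_eq_mul, mul_one, lpar, hpar]

omit hpar in
lemma rho_inj :
    Function.Injective (fun p : List (Fin m) × Fin m => (p.1 ++ [a], p.2)) := by
  rintro ⟨I, y⟩ ⟨I', y'⟩ h
  simp only [Prod.mk.injEq] at h
  exact Prod.ext (List.append_cancel_right h.1) h.2

lemma rho_apply (I : List (Fin m)) (y : Fin m) (φ : Cochain m) :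
    rho r [a] φ (I ++ [a], y) = φ (I, y) := by
  rw [rho_eq_lmapDomain hpar]
  exact Finsupp.mapDomain_apply rho_inj φ (I, y)

lemma rho_ne {K : List (Fin m)} {y : Fin m} {φ : Cochain m}
    (h : rho r [a] φ (K, y) ≠ 0) :
    ∃ I, K = I ++ [a] ∧ rho r [a] φ (K, y) = φ (I, y) := by
  by_cases h' : ∃ I, K = I ++ [a]
  · obtain ⟨I, rfl⟩ := h'
    exact ⟨I, rfl, rho_apply hpar I y φ⟩
  · exfalso; apply h
    rw [rho_eq_lmapDomain hpar]
    apply Finsupp.mapDomain_notin_range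
    rintro ⟨⟨I, z⟩, hz⟩
    simp only [Prod.mk.injEq] at hz
    exact h' ⟨I, hz.1.symm⟩

end Ops

section Core
variable (r s : ℕ)

/-- Embedding of middle letters into `Fin (r+s)`. -/
def gg (d : Fin (r + s - 1)) : Fin (r + s) := ⟨d.1, by have := d.2; omega⟩

/-- Letter map for words: letter `0` goes to `a`, other letters to middle indices. -/
def ga (a : Fin (r + s)) (d : Fin (r + s - 1)) : Fin (r + s) :=
  if (d : ℕ) = 0 then a else gg r s d

/-- Weight of a letter: `0` is heaviest. -/
def ell (d : Fin (r + s - 1)) : ℕ := if (d : ℕ) = 0 then r + s else (d : ℕ)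

/-- Numeric key of a word (positional, base `r+s+1`, letter `0` heaviest). -/
def keyN : List (Fin (r + s - 1)) → ℕ
  | [] => 0
  | d :: w => ell r s d * (r + s + 1) ^ w.length + keyN w

/-- The basis family of `Ĉ^•_x`. -/
noncomputable def tt (a b x : Fin (r + s)) : List (Fin (r + s - 1)) → Cochain (r + s)
  | [] => Finsupp.single (([] : List (Fin (r + s))), x) 1
  | [d] => Finsupp.single ([ga r s a d], x) 1
  | d :: d' :: w =>
      if (d : ℕ) = 0 then
        if (d' : ℕ) = 0 then theta a b (tt a b x w)
        else (lam [a] + rho r [a]) (lam [ga r s a d'] (tt a b x w))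
      else lam [ga r s a d] (tt a b x (d' :: w))

/-- Leading monomial of a word. -/
def lead (a b : Fin (r + s)) : List (Fin (r + s - 1)) → List (Fin (r + s))
  | [] => []
  | [d] => [ga r s a d]
  | d :: d' :: w =>
      if (d : ℕ) = 0 ∧ (d' : ℕ) = 0 then a :: b :: lead a b w
      else ga r s a d :: lead a b (d' :: w)

variable {r s}
variable {a b : Fin (r + s)}

lemma ga_inj (ha : (a : ℕ) = 0) {d e : Fin (r + s - 1)} (h : ga r s a d = ga r s a e) :
    d = e := by
  have := congrArg (Fin.val) h
  unfold ga gg at this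
  split at this <;> split at this <;> simp_all <;> omega

lemma ga_ne_b (ha : (a : ℕ) = 0) (hb : (b : ℕ) = r + s - 1)
    (d : Fin (r + s - 1)) : ga r s a d ≠ b := by
  intro h
  have := congrArg (Fin.val) h
  have hd := d.2
  unfold ga gg at this
  split at this <;> simp_all <;> omega

lemma ga_eq_a {d : Fin (r + s - 1)} (hd : (d : ℕ) = 0) : ga r s a d = a := if_pos hd

lemma ga_ne_a (ha : (a : ℕ) = 0) {d : Fin (r + s - 1)} (hd : (d : ℕ) ≠ 0) :
    ga r s a d ≠ a := by
  intro h
  have := congrArg (Fin.val) h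
  unfold ga gg at this
  rw [if_neg hd] at this
  simp only [ha] at this
  exact hd this

lemma a_ne_b (hr : 1 ≤ r) (hs : 1 ≤ s) (ha : (a : ℕ) = 0) (hb : (b : ℕ) = r + s - 1) :
    a ≠ b := by
  intro h
  have := congrArg (Fin.val) h
  omega

lemma par_a (hr : 1 ≤ r) (ha : (a : ℕ) = 0) : par r a = 0 := by
  simp only [par, ha]
  rw [if_pos (by omega : (0:ℕ) < r)]

lemma keyN_lt : ∀ w : List (Fin (r + s - 1)), keyN r s w < (r + s + 1) ^ w.length
  | [] => by simp [keyN]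
  | d :: w => by
      have h := keyN_lt w
      have hd : ell r s d < r + s + 1 := by
        unfold ell; split
        · omega
        · have := d.2; omega
      have hp : 0 < (r + s + 1) ^ w.length := pow_pos (by omega) _
      simp only [keyN, List.length_cons, pow_succ]
      nlinarith

lemma keyN_lt_of_head {d e : Fin (r + s - 1)} {u u' : List (Fin (r + s - 1))}
    (hlen : u.length = u'.length) (h : ell r s d < ell r s e) :
    keyN r s (d :: u) < keyN r s (e :: u') := by
  have h1 := keyN_lt (r := r) (s := s) u
  rw [hlen] at h1
  simp only [keyN, hlen]
  nlinarith [pow_pos (show 0 < r + s + 1 by omega) u'.length]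

lemma keyN_lt_of_tail {d : Fin (r + s - 1)} {u u' : List (Fin (r + s - 1))}
    (hlen : u.length = u'.length) (h : keyN r s u < keyN r s u') :
    keyN r s (d :: u) < keyN r s (d :: u') := by
  simp only [keyN, hlen]; omega

lemma ell_lt_zero {d e : Fin (r + s - 1)} (hd : (d : ℕ) ≠ 0) (he : (e : ℕ) = 0) :
    ell r s d < ell r s e := by
  have hd2 := d.2
  simp only [ell, if_neg hd, if_pos he]
  omega

lemma lead_00 {d d' : Fin (r + s - 1)} (v : List (Fin (r + s - 1)))
    (hd : (d : ℕ) = 0) (hd' : (d' : ℕ) = 0) :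
    lead r s a b (d :: d' :: v) = a :: b :: lead r s a b v := by
  simp [lead, hd, hd']

lemma lead_cons {d d' : Fin (r + s - 1)} (v : List (Fin (r + s - 1)))
    (h : ¬((d : ℕ) = 0 ∧ (d' : ℕ) = 0)) :
    lead r s a b (d :: d' :: v) = ga r s a d :: lead r s a b (d' :: v) := by
  simp only [lead, if_neg h]

lemma lead_cons' {d : Fin (r + s - 1)} (v : List (Fin (r + s - 1)))
    (hd : (d : ℕ) ≠ 0) :
    lead r s a b (d :: v) = ga r s a d :: lead r s a b v := by
  cases v with
  | nil => rfl
  | cons e v' => exact lead_cons v' (by tauto)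

end Core

end ChatDimAux


section TTLead
variable {r s : ℕ} {a b : Fin (r + s)}

lemma tt_lead (hr : 1 ≤ r) (hs : 1 ≤ s) (ha : (a : ℕ) = 0) (hb : (b : ℕ) = r + s - 1)
    (x : Fin (r + s)) :
    ∀ w : List (Fin (r + s - 1)), tt r s a b x w (lead r s a b w, x) = 1
  | [] => by simp [tt, lead]
  | [d] => by simp [tt, lead]
  | d :: d' :: w => by
    by_cases hd : (d : ℕ) = 0
    · by_cases hd' : (d' : ℕ) = 0
      · -- theta case
        rw [lead_00 w hd hd']
        show (if (d : ℕ) = 0 then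
            if (d' : ℕ) = 0 then theta a b (tt r s a b x w)
            else (lam [a] + rho r [a]) (lam [ga r s a d'] (tt r s a b x w))
          else lam [ga r s a d] (tt r s a b x (d' :: w))) (a :: b :: lead r s a b w, x) = 1
        rw [if_pos hd, if_pos hd']
        have h2 : lam [b, a] (tt r s a b x w) ((a :: b :: lead r s a b w), x) = 0 := by
          by_contra hc
          obtain ⟨I, hI, -⟩ := lam_ne hc
          simp only [List.cons_append, List.nil_append, List.cons.injEq] at hI
          exact a_ne_b hr hs ha hb hI.1
        have h1 : lam [a, b] (tt r s a b x w) ((a :: b :: lead r s a b w), x)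
            = tt r s a b x w (lead r s a b w, x) := by
          simpa using lam_apply [a, b] (lead r s a b w) x (tt r s a b x w)
        simp only [theta, LinearMap.sub_apply, Finsupp.sub_apply, h1, h2,
          tt_lead hr hs ha hb x w, sub_zero]
      · -- (lam [a] + rho [a]) ∘ lam [c] case
        have hl : lead r s a b (d :: d' :: w) = a :: ga r s a d' :: lead r s a b w := by
          rw [lead_cons w (by tauto), ga_eq_a hd, lead_cons' w hd']
        rw [hl]
        show (if (d : ℕ) = 0 then
            if (d' : ℕ) = 0 then theta a b (tt r s a b x w)
            else (lam [a] + rho r [a]) (lam [ga r s a d'] (tt r s a b x w))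
          else lam [ga r s a d] (tt r s a b x (d' :: w)))
            (a :: ga r s a d' :: lead r s a b w, x) = 1
        rw [if_pos hd, if_neg hd']
        rw [LinearMap.add_apply, Finsupp.add_apply]
        have h2 : rho r [a] (lam [ga r s a d'] (tt r s a b x w))
            ((a :: ga r s a d' :: lead r s a b w), x) = 0 := by
          by_contra hc
          obtain ⟨I, hI, hv⟩ := rho_ne (par_a hr ha) hc
          have hψ : lam [ga r s a d'] (tt r s a b x w) (I, x) ≠ 0 := by
            rw [← hv]; exact hc
          obtain ⟨I', hI', -⟩ := lam_ne hψ
          rw [hI'] at hI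
          simp only [List.singleton_append, List.cons_append, List.cons.injEq] at hI
          exact ga_ne_a ha hd' hI.1.symm
        have h1 : lam [a] (lam [ga r s a d'] (tt r s a b x w))
            ((a :: ga r s a d' :: lead r s a b w), x)
            = tt r s a b x w (lead r s a b w, x) := by
          have e1 := lam_apply [a] (ga r s a d' :: lead r s a b w) x
            (lam [ga r s a d'] (tt r s a b x w))
          have e2 := lam_apply [ga r s a d'] (lead r s a b w) x (tt r s a b x w)
          simpa using e1.trans (by simpa using e2)
        rw [h1, h2, tt_lead hr hs ha hb x w, add_zero]
    · -- lam [c] case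
      rw [lead_cons w (by tauto)]
      show (if (d : ℕ) = 0 then
          if (d' : ℕ) = 0 then theta a b (tt r s a b x w)
          else (lam [a] + rho r [a]) (lam [ga r s a d'] (tt r s a b x w))
        else lam [ga r s a d] (tt r s a b x (d' :: w)))
          (ga r s a d :: lead r s a b (d' :: w), x) = 1
      rw [if_neg hd]
      exact (lam_apply [ga r s a d] (lead r s a b (d' :: w)) x
        (tt r s a b x (d' :: w))).trans (tt_lead hr hs ha hb x (d' :: w))

end TTLead


section TTCoeff
variable {r s : ℕ} {a b : Fin (r + s)}

lemma tt_unfold (x : Fin (r + s)) (d d' : Fin (r + s - 1)) (w : List (Fin (r + s - 1))) :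
    tt r s a b x (d :: d' :: w)
      = if (d : ℕ) = 0 then
          if (d' : ℕ) = 0 then theta a b (tt r s a b x w)
          else (lam [a] + rho r [a]) (lam [ga r s a d'] (tt r s a b x w))
        else lam [ga r s a d] (tt r s a b x (d' :: w)) := rfl

lemma lead_head_a (ha : (a : ℕ) = 0) {d d' : Fin (r + s - 1)} (v : List (Fin (r + s - 1)))
    (hd : (d : ℕ) = 0) :
    ∃ T, lead r s a b (d :: d' :: v) = a :: T := by
  by_cases hd' : (d' : ℕ) = 0
  · exact ⟨b :: lead r s a b v, lead_00 v hd hd'⟩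
  · exact ⟨lead r s a b (d' :: v), by rw [lead_cons v (by tauto), ga_eq_a hd]⟩

lemma tt_coeff (hr : 1 ≤ r) (hs : 1 ≤ s) (ha : (a : ℕ) = 0) (hb : (b : ℕ) = r + s - 1)
    (x : Fin (r + s)) :
    ∀ w' w : List (Fin (r + s - 1)), w.length = w'.length →
      tt r s a b x w' (lead r s a b w, x) ≠ 0 →
      w = w' ∨ keyN r s w < keyN r s w'
  | [], w, hl, _ => Or.inl (List.length_eq_zero_iff.mp hl)
  | [e], w, hl, h => by
      obtain ⟨d, rfl⟩ : ∃ d, w = [d] := by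
        cases w with
        | nil => simp at hl
        | cons d w0 =>
          cases w0 with
          | nil => exact ⟨d, rfl⟩
          | cons u v => simp at hl
      left
      simp only [tt, lead, Finsupp.single_apply] at h
      split at h
      · rename_i heq
        simp only [Prod.mk.injEq, List.cons.injEq] at heq
        rw [ga_inj ha heq.1.1]
      · exact absurd rfl h
  | e :: e' :: v', w, hl, h => by
      obtain ⟨d, d', v, rfl⟩ : ∃ d d' v, w = d :: d' :: v := by
        cases w with
        | nil => simp at hl
        | cons d w0 =>
          cases w0 with
          | nil => simp at hl
          | cons d' v => exact ⟨d, d', v, rfl⟩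
      have hlen2 : v.length = v'.length := by simpa using hl
      have hlen1 : (d' :: v).length = (e' :: v').length := by simpa using hl
      by_cases he : (e : ℕ) = 0
      · by_cases hd : (d : ℕ) = 0
        · -- both words start with the heavy letter
          by_cases he' : (e' : ℕ) = 0
          · -- w' = 0 :: 0 :: v' : theta case
            rw [tt_unfold, if_pos he, if_pos he'] at h
            simp only [theta, LinearMap.sub_apply, Finsupp.sub_apply] at h
            have h' : lam [a, b] (tt r s a b x v') (lead r s a b (d :: d' :: v), x) ≠ 0 ∨
                lam [b, a] (tt r s a b x v') (lead r s a b (d :: d' :: v), x) ≠ 0 := by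
              by_contra hc
              push_neg at hc
              rw [hc.1, hc.2, sub_zero] at h
              exact h rfl
            rcases h' with h1 | h2
            · obtain ⟨I, hI, hv⟩ := lam_ne h1
              by_cases hd' : (d' : ℕ) = 0
              · rw [lead_00 v hd hd'] at hI
                simp only [List.cons_append, List.nil_append, List.cons.injEq] at hI
                have hIv : lead r s a b v = I := by tauto
                have htv : tt r s a b x v' (lead r s a b v, x) ≠ 0 := by
                  rw [hIv, ← hv]
                  exact h1
                have hde : d = e := Fin.ext (by omega)
                have hde' : d' = e' := Fin.ext (by omega)
                rcases tt_coeff hr hs ha hb x v' v hlen2 htv with rfl | hk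
                · left; rw [hde, hde']
                · right
                  rw [hde, hde']
                  exact keyN_lt_of_tail hlen1 (keyN_lt_of_tail hlen2 hk)
              · rw [lead_cons v (by tauto), ga_eq_a hd, lead_cons' v hd'] at hI
                simp only [List.cons_append, List.nil_append, List.cons.injEq] at hI
                exact absurd (show ga r s a d' = b by tauto) (ga_ne_b ha hb d')
            · exfalso
              obtain ⟨I, hI, -⟩ := lam_ne h2
              obtain ⟨T, hT⟩ := lead_head_a ha v hd
              rw [hT] at hI
              simp only [List.cons_append, List.nil_append, List.cons.injEq] at hI
              exact a_ne_b hr hs ha hb hI.1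
          · -- w' = 0 :: e' :: v' with e' ≠ 0
            rw [tt_unfold, if_pos he, if_neg he'] at h
            rw [LinearMap.add_apply, Finsupp.add_apply] at h
            have h' : lam [a] (lam [ga r s a e'] (tt r s a b x v'))
                  (lead r s a b (d :: d' :: v), x) ≠ 0 ∨
                rho r [a] (lam [ga r s a e'] (tt r s a b x v'))
                  (lead r s a b (d :: d' :: v), x) ≠ 0 := by
              by_contra hc
              push_neg at hc
              rw [hc.1, hc.2, add_zero] at h
              exact h rfl
            rcases h' with h1 | h2
            · obtain ⟨I, hI, hv⟩ := lam_ne h1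
              have hψ : lam [ga r s a e'] (tt r s a b x v') (I, x) ≠ 0 := by
                rw [← hv]; exact h1
              obtain ⟨I', hI', hv'⟩ := lam_ne hψ
              by_cases hd' : (d' : ℕ) = 0
              · exfalso
                rw [lead_00 v hd hd'] at hI
                rw [hI'] at hI
                simp only [List.singleton_append, List.cons_append, List.nil_append,
                  List.cons.injEq] at hI
                exact ga_ne_b ha hb e' hI.2.1.symm
              · rw [lead_cons v (by tauto), ga_eq_a hd, lead_cons' v hd'] at hI
                rw [hI'] at hI
                simp only [List.singleton_append, List.cons_append, List.nil_append,
                  List.cons.injEq] at hI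
                have hde' : d' = e' := ga_inj ha hI.2.1
                have hde : d = e := Fin.ext (by omega)
                have htv : tt r s a b x v' (lead r s a b v, x) ≠ 0 := by
                  rw [hI.2.2, ← hv']; exact hψ
                rcases tt_coeff hr hs ha hb x v' v hlen2 htv with rfl | hk
                · left; rw [hde, hde']
                · right
                  rw [hde, hde']
                  exact keyN_lt_of_tail hlen1 (keyN_lt_of_tail hlen2 hk)
            · exfalso
              obtain ⟨I, hI, hv⟩ := rho_ne (par_a hr ha) h2
              have hψ : lam [ga r s a e'] (tt r s a b x v') (I, x) ≠ 0 := by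
                rw [← hv]; exact h2
              obtain ⟨I', hI', -⟩ := lam_ne hψ
              rw [hI'] at hI
              obtain ⟨T, hT⟩ := lead_head_a ha v hd
              rw [hT] at hI
              simp only [List.singleton_append, List.cons_append, List.cons.injEq] at hI
              exact ga_ne_a ha he' hI.1.symm
        · -- d ≠ 0 and e = 0 : strict key inequality by heads
          right
          exact keyN_lt_of_head hlen1 (ell_lt_zero hd he)
      · -- e ≠ 0
        rw [tt_unfold, if_neg he] at h
        obtain ⟨I, hI, hv⟩ := lam_ne h
        have htt : tt r s a b x (e' :: v') (I, x) ≠ 0 := by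
          rw [← hv]; exact h
        by_cases hd : (d : ℕ) = 0
        · exfalso
          obtain ⟨T, hT⟩ := lead_head_a ha v hd
          rw [hT] at hI
          simp only [List.singleton_append, List.cons.injEq] at hI
          exact ga_ne_a ha he hI.1.symm
        · rw [lead_cons v (by tauto)] at hI
          simp only [List.singleton_append, List.cons.injEq] at hI
          have hde : d = e := ga_inj ha hI.1
          have htt' : tt r s a b x (e' :: v') (lead r s a b (d' :: v), x) ≠ 0 := by
            rw [hI.2]; exact htt
          rcases tt_coeff hr hs ha hb x (e' :: v') (d' :: v) hlen1 htt' with heq | hk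
          · left; rw [hde, ← heq]
          · right
            rw [hde]
            exact keyN_lt_of_tail hlen1 hk
end TTCoeff


section Triangular

lemma triangular_linearIndependent {ι κ : Type*} (v : ι → (κ →₀ ℂ)) (P : ι → κ)
    (key : ι → ℕ) (h1 : ∀ i, v i (P i) = 1)
    (h2 : ∀ i j, v j (P i) ≠ 0 → i = j ∨ key i < key j) :
    LinearIndependent ℂ v := by
  rw [linearIndependent_iff']
  intro t g hg i hi
  by_contra hgi
  have hS : (t.filter fun j => g j ≠ 0).Nonempty := ⟨i, Finset.mem_filter.mpr ⟨hi, hgi⟩⟩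
  obtain ⟨j₀, hj₀, hmax⟩ := Finset.exists_max_image _ key hS
  have hj₀t : j₀ ∈ t := (Finset.mem_filter.mp hj₀).1
  have hgj₀ : g j₀ ≠ 0 := (Finset.mem_filter.mp hj₀).2
  have happ : (∑ i ∈ t, g i • v i) (P j₀) = 0 := by rw [hg]; rfl
  rw [Finsupp.finset_sum_apply] at happ
  have hsum : ∑ i ∈ t, (g i • v i) (P j₀) = g j₀ := by
    rw [Finset.sum_eq_single_of_mem j₀ hj₀t]
    · rw [Finsupp.smul_apply, h1 j₀, smul_eq_mul, mul_one]
    · intro i hit hne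
      rw [Finsupp.smul_apply, smul_eq_mul]
      by_cases hgz : g i = 0
      · rw [hgz, zero_mul]
      · by_cases hvz : v i (P j₀) = 0
        · rw [hvz, mul_zero]
        · exfalso
          rcases h2 j₀ i hvz with rfl | hk
          · exact hne rfl
          · have := hmax i (Finset.mem_filter.mpr ⟨hit, hgz⟩)
            omega
  exact hgj₀ (by rw [← hsum, happ])

end Triangular

section Assembly
variable {r s : ℕ} {a b : Fin (r + s)}

lemma tt_linearIndependent (hr : 1 ≤ r) (hs : 1 ≤ s) (ha : (a : ℕ) = 0)
    (hb : (b : ℕ) = r + s - 1) (x : Fin (r + s)) (n : ℕ) :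
    LinearIndependent ℂ
      (fun w : List.Vector (Fin (r + s - 1)) n => tt r s a b x w.1) := by
  apply triangular_linearIndependent _ (fun w => (lead r s a b w.1, x))
    (fun w => keyN r s w.1)
  · intro i; exact tt_lead hr hs ha hb x i.1
  · intro i j hij
    rcases tt_coeff hr hs ha hb x j.1 i.1 (i.2.trans j.2.symm) hij with heq | hk
    · exact Or.inl (List.Vector.eq _ _ heq)
    · exact Or.inr hk

lemma exists_middle (ha : (a : ℕ) = 0) (hb : (b : ℕ) = r + s - 1) {c : Fin (r + s)}
    (hc1 : c ≠ a) (hc2 : c ≠ b) :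
    ∃ d : Fin (r + s - 1), (d : ℕ) ≠ 0 ∧ ga r s a d = c := by
  have h1 : (c : ℕ) ≠ 0 := fun h => hc1 (Fin.ext (by omega))
  have h2 : (c : ℕ) ≠ r + s - 1 := fun h => hc2 (Fin.ext (by omega))
  have hcl := c.2
  refine ⟨⟨(c : ℕ), by omega⟩, h1, ?_⟩
  unfold ga gg
  rw [if_neg h1]

lemma aux_mem {F : Cochain (r + s) →ₗ[ℂ] Cochain (r + s)} {T U : Set (Cochain (r + s))}
    {y : Cochain (r + s)} (hy : y ∈ Submodule.span ℂ T) (h : ⇑F '' T ⊆ U) :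
    F y ∈ Submodule.span ℂ U := by
  have h1 : F y ∈ Submodule.map F (Submodule.span ℂ T) := Submodule.mem_map_of_mem hy
  rw [Submodule.map_span] at h1
  exact Submodule.span_mono h h1

lemma chat_eq_span (hr : 1 ≤ r) (hs : 1 ≤ s) (ha : (a : ℕ) = 0)
    (hb : (b : ℕ) = r + s - 1) (x : Fin (r + s)) :
    ∀ n : ℕ, Chat r a b x n
      = Submodule.span ℂ (tt r s a b x '' {w | w.length = n})
  | 0 => by
      rw [Chat]
      have h1 : {w : List (Fin (r + s - 1)) | w.length = 0} = {([] : List (Fin (r + s - 1)))} := by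
        ext w; simp [List.length_eq_zero_iff]
      rw [h1, Set.image_singleton]
      rfl
  | 1 => by
      have hd0 : ((⟨0, by omega⟩ : Fin (r + s - 1)) : ℕ) = 0 := rfl
      apply le_antisymm
      · rw [Chat, Submodule.span_le]
        rintro f (hf | hf)
        · rw [Set.mem_singleton_iff] at hf
          subst hf
          apply Submodule.subset_span
          refine ⟨[⟨0, by omega⟩], rfl, ?_⟩
          show Finsupp.single ([a], x) 1 = Finsupp.single ([ga r s a ⟨0, by omega⟩], x) 1
          rw [ga_eq_a hd0]
        · simp only [Set.mem_iUnion, Set.mem_setOf_eq] at hf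
          obtain ⟨c, ⟨hc1, hc2⟩, y, hy, rfl⟩ := hf
          have hy' : y ∈ Submodule.span ℂ (tt r s a b x '' {w | w.length = 0}) := by
            rw [← chat_eq_span hr hs ha hb x 0]; exact hy
          apply aux_mem hy'
          rintro g ⟨u, ⟨w, hw, rfl⟩, rfl⟩
          obtain rfl : w = [] := List.length_eq_zero_iff.mp hw
          obtain ⟨d, hd, rfl⟩ := exists_middle ha hb hc1 hc2
          refine ⟨[d], rfl, ?_⟩
          show tt r s a b x [d] = lam [ga r s a d] (tt r s a b x [])
          rw [show tt r s a b x [] = Finsupp.single (([] : List (Fin (r + s))), x) 1 from rfl,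
            lam_single]
          rfl
      · rw [Submodule.span_le]
        rintro f ⟨w, hw, rfl⟩
        obtain ⟨d, rfl⟩ : ∃ d, w = [d] := by
          cases w with
          | nil => simp at hw
          | cons d w0 =>
            cases w0 with
            | nil => exact ⟨d, rfl⟩
            | cons u v => simp at hw
        rw [Chat]
        apply Submodule.subset_span
        by_cases hd : (d : ℕ) = 0
        · left
          rw [Set.mem_singleton_iff]
          show tt r s a b x [d] = _
          rw [show tt r s a b x [d] = Finsupp.single ([ga r s a d], x) 1 from rfl, ga_eq_a hd]
        · right
          simp only [Set.mem_iUnion, Set.mem_setOf_eq]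
          refine ⟨ga r s a d, ⟨ga_ne_a ha hd, ga_ne_b ha hb d⟩, tt r s a b x [], ?_, ?_⟩
          · have h0 : tt r s a b x [] ∈ Chat r a b x 0 := by
              rw [chat_eq_span hr hs ha hb x 0]
              exact Submodule.subset_span ⟨[], rfl, rfl⟩
            exact h0
          · rw [show tt r s a b x [] = Finsupp.single (([] : List (Fin (r + s))), x) 1 from rfl,
              lam_single]
            rfl
  | (n + 2) => by
      have hd0 : ((⟨0, by omega⟩ : Fin (r + s - 1)) : ℕ) = 0 := rfl
      have hmem : ∀ k (v : List (Fin (r + s - 1))), v.length = k →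
          tt r s a b x v ∈ Chat r a b x k → True := fun _ _ _ _ => trivial
      apply le_antisymm
      · rw [Chat, Submodule.span_le]
        rintro f ((hf | hf) | hf)
        · -- lam [c] on Chat (n+1)
          simp only [Set.mem_iUnion, Set.mem_setOf_eq] at hf
          obtain ⟨c, ⟨hc1, hc2⟩, y, hy, rfl⟩ := hf
          have hy' : y ∈ Submodule.span ℂ (tt r s a b x '' {w | w.length = n + 1}) := by
            rw [← chat_eq_span hr hs ha hb x (n + 1)]; exact hy
          apply aux_mem hy'
          rintro g ⟨u, ⟨w, hw, rfl⟩, rfl⟩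
          obtain ⟨d, hd, rfl⟩ := exists_middle ha hb hc1 hc2
          obtain ⟨w0, w1, rfl⟩ : ∃ w0 w1, w = w0 :: w1 := by
            cases w with
            | nil => simp at hw
            | cons w0 w1 => exact ⟨w0, w1, rfl⟩
          refine ⟨d :: w0 :: w1, by simpa using hw, ?_⟩
          rw [tt_unfold, if_neg hd]
        · -- theta on Chat n
          obtain ⟨y, hy, rfl⟩ := hf
          have hy' : y ∈ Submodule.span ℂ (tt r s a b x '' {w | w.length = n}) := by
            rw [← chat_eq_span hr hs ha hb x n]; exact hy
          apply aux_mem hy'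
          rintro g ⟨u, ⟨w, hw, rfl⟩, rfl⟩
          refine ⟨⟨0, by omega⟩ :: ⟨0, by omega⟩ :: w, by simpa using hw, ?_⟩
          rw [tt_unfold, if_pos hd0, if_pos hd0]
        · -- (lam [a] + rho [a]) ∘ lam [c] on Chat n
          simp only [Set.mem_iUnion, Set.mem_setOf_eq] at hf
          obtain ⟨c, ⟨hc1, hc2⟩, z, ⟨y, hy, rfl⟩, rfl⟩ := hf
          have hy' : y ∈ Submodule.span ℂ (tt r s a b x '' {w | w.length = n}) := by
            rw [← chat_eq_span hr hs ha hb x n]; exact hy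
          obtain ⟨d, hd, rfl⟩ := exists_middle ha hb hc1 hc2
          have := aux_mem (F := ((lam [a] + rho r [a]) ∘ₗ lam [ga r s a d] :
              Cochain (r + s) →ₗ[ℂ] Cochain (r + s)))
            (U := tt r s a b x '' {w | w.length = n + 2}) hy' ?_
          · simpa using this
          · rintro g ⟨u, ⟨w, hw, rfl⟩, rfl⟩
            refine ⟨⟨0, by omega⟩ :: d :: w, by simpa using hw, ?_⟩
            rw [tt_unfold, if_pos hd0, if_neg hd]
            rfl
      · rw [Submodule.span_le]
        rintro f ⟨w, hw, rfl⟩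
        obtain ⟨d, d', v, rfl⟩ : ∃ d d' v, w = d :: d' :: v := by
          cases w with
          | nil => simp at hw
          | cons d w0 =>
            cases w0 with
            | nil => simp at hw
            | cons d' v => exact ⟨d, d', v, rfl⟩
        have hv : v.length = n := by simpa using hw
        rw [Chat]
        apply Submodule.subset_span
        by_cases hd : (d : ℕ) = 0
        · by_cases hd' : (d' : ℕ) = 0
          · left; right
            refine ⟨tt r s a b x v, ?_, ?_⟩
            · rw [chat_eq_span hr hs ha hb x n]
              exact Submodule.subset_span ⟨v, hv, rfl⟩
            · rw [tt_unfold, if_pos hd, if_pos hd']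
          · right
            simp only [Set.mem_iUnion, Set.mem_setOf_eq]
            refine ⟨ga r s a d', ⟨ga_ne_a ha hd', ga_ne_b ha hb d'⟩,
              lam [ga r s a d'] (tt r s a b x v), ⟨tt r s a b x v, ?_, rfl⟩, ?_⟩
            · rw [chat_eq_span hr hs ha hb x n]
              exact Submodule.subset_span ⟨v, hv, rfl⟩
            · rw [tt_unfold, if_pos hd, if_neg hd']
        · left; left
          simp only [Set.mem_iUnion, Set.mem_setOf_eq]
          refine ⟨ga r s a d, ⟨ga_ne_a ha hd, ga_ne_b ha hb d⟩, tt r s a b x (d' :: v), ?_, ?_⟩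
          · rw [chat_eq_span hr hs ha hb x (n + 1)]
            exact Submodule.subset_span ⟨d' :: v, by simpa using hw, rfl⟩
          · rw [tt_unfold, if_neg hd]

end Assembly


/-- `dim Ĉ^n_x = (r+s−1)^n` for every output `x` and every `n`. -/
theorem Chat_dim (r s : ℕ) (hr : 1 ≤ r) (hs : 1 ≤ s)
    (e1 fs : Fin (r + s)) (he1 : (e1 : ℕ) = 0) (hfs : (fs : ℕ) = r + s - 1) :
    ∀ x : Fin (r + s), ∀ n : ℕ,
      Module.finrank ℂ (Chat r e1 fs x n) = (r + s - 1) ^ n := by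
  intro x n
  rw [chat_eq_span hr hs he1 hfs x n]
  have hrange : tt r s e1 fs x '' {w | w.length = n}
      = Set.range (fun w : List.Vector (Fin (r + s - 1)) n => tt r s e1 fs x w.1) := by
    ext f
    constructor
    · rintro ⟨l, hl, rfl⟩; exact ⟨⟨l, hl⟩, rfl⟩
    · rintro ⟨w, rfl⟩; exact ⟨w.1, w.2, rfl⟩
  rw [hrange, finrank_span_eq_card (tt_linearIndependent hr hs he1 hfs x n), card_vector,
    Fintype.card_fin]


end NilpotentCohomology
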